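/- Let Q be a finite quiver without sources (every vertex has at least one incoming arrow). Then for each vertex i and each integer l, there exists an associated pair (p, q) of paths in Q with t(p) = i and l(q) − l(p) = l. In particular the set Λ^l_i is nonempty. -/

import Mathlib

noncomputable section

/-- A finite quiver: finite sets of vertices and arrows, with source and target maps. -/
structure FQ where
  V : Type
  E : Type
  [fV : Fintype V]
  [fE : Fintype E]
  [dV : DecidableEq V]
  [dE : DecidableEq E]
  s : E → V
  t : E → V

attribute [instance] FQ.fV FQ.fE FQ.dV FQ.dE

/-- `Q` has no sources: every vertex admits an arrow terminating at it. -/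
def FQ.NoSources (Q : FQ) : Prop := ∀ i : Q.V, ∃ e : Q.E, Q.t e = i

/-- The opposite quiver. -/
def FQ.op (Q : FQ) : FQ := { V := Q.V, E := Q.E, s := Q.t, t := Q.s }

/-- Paths in the quiver `Q` from a vertex to a vertex; `cons p e he` is the path
`e ∘ p` obtained by composing an arrow `e` after the path `p` (paths are written
from right to left). -/
inductive QP (Q : FQ) : Q.V → Q.V → Type
  | nil (i : Q.V) : QP Q i i
  | cons {i j : Q.V} (p : QP Q i j) (e : Q.E) (he : Q.s e = j) : QP Q i (Q.t e)

namespace QP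

variable {Q : FQ}

/-- The length of a path. -/
def length : ∀ {i j : Q.V}, QP Q i j → ℕ
  | _, _, .nil _ => 0
  | _, _, .cons p _ _ => length p + 1

/-- The first (rightmost) arrow of a path, if any. -/
def firstArrow : ∀ {i j : Q.V}, QP Q i j → Option Q.E
  | _, _, .nil _ => none
  | _, _, .cons p e _ => some ((firstArrow p).getD e)

/-- The last (leftmost) arrow of a path, if any. -/
def lastArrow : ∀ {i j : Q.V}, QP Q i j → Option Q.E
  | _, _, .nil _ => none
  | _, _, .cons _ e _ => some e

/-- Transport of a path along an equality of its starting vertices. -/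
def castSrc {i i' j : Q.V} (h : i = i') (p : QP Q i j) : QP Q i' j := h ▸ p

/-- Extend a path at its starting vertex by an arrow (`p ↦ p ∘ e`). -/
def preCons (e : Q.E) : ∀ {j : Q.V}, QP Q (Q.t e) j → QP Q (Q.s e) j
  | _, .nil _ => .cons (.nil (Q.s e)) e rfl
  | _, .cons p f hf => .cons (preCons e p) f hf

lemma length_castSrc {i i' j : Q.V} (h : i = i') (p : QP Q i j) :
    (castSrc h p).length = p.length := by subst h; rfl

lemma length_preCons (e : Q.E) : ∀ {j : Q.V} (p : QP Q (Q.t e) j),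
    (preCons e p).length = p.length + 1
  | _, .nil _ => by simp [preCons, length]
  | _, .cons p f hf => by
      show (QP.cons (preCons e p) f hf).length = _
      simp [length, length_preCons e p]

end QP

/-- With respect to a choice `asc` of an *associated* arrow terminating at each
non-source vertex, `IsAssoc Q asc a` says that the arrow `a` is the associated arrow
terminating at its target. -/
def IsAssoc (Q : FQ) (asc : ∀ i : Q.V, (∃ e, Q.t e = i) → Q.E) (a : Q.E) : Prop :=
  asc (Q.t a) ⟨a, rfl⟩ = a

/-- `(p, q)` is an *associated pair*: the paths `p` and `q` start at the same vertex,
and either one of them is trivial, or their first arrows differ, or their common first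
arrow is not associated. -/
def AssocPair (Q : FQ) (asc : ∀ i : Q.V, (∃ e, Q.t e = i) → Q.E)
    {i j j' : Q.V} (p : QP Q i j) (q : QP Q i j') : Prop :=
  ∀ a : Q.E, p.firstArrow = some a → q.firstArrow = some a → ¬ IsAssoc Q asc a

lemma assocPair_nil_left {Q : FQ} {asc : ∀ i : Q.V, (∃ e, Q.t e = i) → Q.E}
    {i j : Q.V} (q : QP Q i j) : AssocPair Q asc (QP.nil i) q := by
  intro a h
  simp [QP.firstArrow] at h

lemma assocPair_nil_right {Q : FQ} {asc : ∀ i : Q.V, (∃ e, Q.t e = i) → Q.E}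
    {i j : Q.V} (p : QP Q i j) : AssocPair Q asc p (QP.nil i) := by
  intro a _ h
  simp [QP.firstArrow] at h

/-- The index set `Λ^l_i` (for `i = x.i`): associated pairs `(p, q)` with
`t(p) = i` and `l(q) - l(p) = l`. -/
structure Lam (Q : FQ) (asc : ∀ i : Q.V, (∃ e, Q.t e = i) → Q.E) (l : ℤ) where
  a : Q.V              -- the common starting vertex of `p` and `q`
  i : Q.V              -- the terminating vertex of `p`
  b : Q.V              -- the terminating vertex of `q`
  p : QP Q a i
  q : QP Q a b
  ok : AssocPair Q asc p q
  deg : (q.length : ℤ) - (p.length : ℤ) = l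

instance {Q : FQ} {asc : ∀ i : Q.V, (∃ e, Q.t e = i) → Q.E} {l : ℤ} :
    DecidableEq (Lam Q asc l) := Classical.decEq _
namespace QP

variable {Q : FQ}

lemma firstArrow_castSrc {i i' j : Q.V} (h : i = i') (p : QP Q i j) :
    (castSrc h p).firstArrow = p.firstArrow := by subst h; rfl

lemma firstArrow_preCons (e : Q.E) : ∀ {j : Q.V} (p : QP Q (Q.t e) j),
    (preCons e p).firstArrow = some e
  | _, .nil _ => by simp [preCons, firstArrow]
  | _, .cons p f hf => by
      show (QP.cons (preCons e p) f hf).firstArrow = some e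
      simp [firstArrow, firstArrow_preCons e p]

lemma firstArrow_eq_none {i j : Q.V} (p : QP Q i j) (h : p.length = 0) :
    p.firstArrow = none := by
  cases p with
  | nil => simp [firstArrow]
  | cons p e he => simp [length] at h

end QP

/-- The backward walk from `i` determined by a choice `f` of incoming arrows. -/
def bwalk (Q : FQ) (f : Q.V → Q.E) (i : Q.V) : ℕ → Q.V
  | 0 => i
  | n + 1 => Q.s (f (bwalk Q f i n))

/-- The backward path of length `n` ending at `i`. -/
def bpath (Q : FQ) (f : Q.V → Q.E) (hf : ∀ a, Q.t (f a) = a) (i : Q.V) :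
    (n : ℕ) → QP Q (bwalk Q f i n) i :=
  Nat.rec (QP.nil i) (fun n p =>
    QP.preCons (f (bwalk Q f i n)) (QP.castSrc (hf (bwalk Q f i n)).symm p))

lemma bpath_length (Q : FQ) (f : Q.V → Q.E) (hf : ∀ a, Q.t (f a) = a) (i : Q.V) :
    ∀ n : ℕ, (bpath Q f hf i n).length = n
  | 0 => by show (QP.nil i).length = 0; simp [QP.length]
  | n + 1 => by
      show (QP.preCons _ _).length = n + 1
      rw [QP.length_preCons, QP.length_castSrc]
      exact congrArg Nat.succ (bpath_length Q f hf i n)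

lemma bpath_firstArrow (Q : FQ) (f : Q.V → Q.E) (hf : ∀ a, Q.t (f a) = a) (i : Q.V)
    (n : ℕ) : (bpath Q f hf i (n + 1)).firstArrow = some (f (bwalk Q f i n)) := by
  show (QP.preCons _ _).firstArrow = _
  rw [QP.firstArrow_preCons]

/-- Forward paths along the backward walk: from `bwalk m` one can travel forward
for any `N ≤ m` steps, ending at `bwalk (m - N)`. -/
lemma fpath_exists (Q : FQ) (f : Q.V → Q.E) (hf : ∀ a, Q.t (f a) = a) (i : Q.V) :
    ∀ (N m : ℕ), N ≤ m → ∃ (b : Q.V) (q : QP Q (bwalk Q f i m) b),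
      q.length = N ∧ b = bwalk Q f i (m - N) ∧
      (q.firstArrow = if N = 0 then none else some (f (bwalk Q f i (m - 1)))) := by
  intro N
  induction N with
  | zero =>
      intro m _
      exact ⟨bwalk Q f i m, QP.nil _, by simp [QP.length], by simp, by simp [QP.firstArrow]⟩
  | succ N ih =>
      intro m hm
      obtain ⟨b, q, hlen, hb, hfa⟩ := ih m (Nat.le_of_succ_le hm)
      set e := f (bwalk Q f i (m - N - 1)) with he_def
      have hse : Q.s e = b := by
        rw [hb]
        show bwalk Q f i (m - N - 1 + 1) = bwalk Q f i (m - N)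
        congr 1
        omega
      refine ⟨Q.t e, QP.cons q e hse, ?_, ?_, ?_⟩
      · simp [QP.length, hlen]
      · rw [hf]
        congr 1
      · have hc : (QP.cons q e hse).firstArrow = some ((q.firstArrow).getD e) := by
          simp [QP.firstArrow]
        rw [hc]
        rcases Nat.eq_zero_or_pos N with h0 | hpos
        · subst h0
          rw [QP.firstArrow_eq_none q hlen]
          simp [he_def]
        · rw [hfa, if_neg (show ¬ N = 0 by omega), if_neg (show ¬ N + 1 = 0 by omega)]
          rfl

lemma bwalk_periodic (Q : FQ) (f : Q.V → Q.E) (i : Q.V) {j L : ℕ}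
    (h : bwalk Q f i (j + L) = bwalk Q f i j) :
    ∀ t c : ℕ, bwalk Q f i (j + t + c * L) = bwalk Q f i (j + t) := by
  have step : ∀ t : ℕ, bwalk Q f i (j + t + L) = bwalk Q f i (j + t) := by
    intro t
    induction t with
    | zero => simpa using h
    | succ t ih =>
        have : j + (t + 1) + L = (j + t + L) + 1 := by omega
        rw [this]
        show Q.s (f (bwalk Q f i (j + t + L))) = _
        rw [ih]
        rfl
  intro t c
  induction c with
  | zero => simp
  | succ c ih =>
      have : j + t + (c + 1) * L = (j + t + c * L) + L := by ring
      rw [this]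
      have h2 := step (t + c * L)
      rw [← add_assoc] at h2
      rw [h2, ih]

/-- **Non-emptiness of `Λ^l_i` (Lemma 2.2).**  Let `Q` be a finite quiver without
sources, with a choice `asc` of associated arrow terminating at each vertex.  Then for
every vertex `i` and every integer `l` there is an associated pair `(p, q)` of paths in
`Q` with `t(p) = i` and `l(q) - l(p) = l`; that is, `Λ^l_i ≠ ∅`. -/
theorem lam_nonempty (Q : FQ) (hQ : Q.NoSources)
    (asc : ∀ i : Q.V, (∃ e, Q.t e = i) → Q.E)
    (hasc : ∀ (i : Q.V) (h : ∃ e, Q.t e = i), Q.t (asc i h) = i)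
    (i : Q.V) (l : ℤ) :
    ∃ (a b : Q.V) (p : QP Q a i) (q : QP Q a b),
      AssocPair Q asc p q ∧ (q.length : ℤ) - (p.length : ℤ) = l := by
  classical
  choose f hf using hQ
  rcases le_or_gt l 0 with hl | hl
  · -- `p` is a backward path of length `-l` ending at `i`, `q` is trivial.
    refine ⟨bwalk Q f i (-l).toNat, bwalk Q f i (-l).toNat,
      bpath Q f hf i (-l).toNat, QP.nil _, assocPair_nil_right _, ?_⟩
    rw [bpath_length]
    simp only [QP.length]
    omega
  · -- find a cycle on the backward walk
    have hex : ∃ j, ∃ k, j < k ∧ bwalk Q f i j = bwalk Q f i k := by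
      obtain ⟨x, y, hxy, hv⟩ := Finite.exists_ne_map_eq_of_infinite (bwalk Q f i)
      rcases Nat.lt_or_ge x y with h | h
      · exact ⟨x, y, h, hv⟩
      · exact ⟨y, x, lt_of_le_of_ne h (Ne.symm hxy), hv.symm⟩
    set j := Nat.find hex with hj_def
    obtain ⟨k, hjk, hv⟩ := Nat.find_spec hex
    set L := k - j with hL_def
    have hL : 1 ≤ L := by omega
    have hper := bwalk_periodic Q f i (j := j) (L := L)
      (by rw [show j + L = k by omega]; exact hv.symm)
    set c := l.toNat with hc_def
    have hc : 1 ≤ c := by omega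
    set M := j + c * L with hM_def
    set N := j + c with hN_def
    have hNM : N ≤ M := by
      have : c ≤ c * L := Nat.le_mul_of_pos_right c (by omega)
      omega
    obtain ⟨b, q0, hq0len, hb, hq0fa⟩ := fpath_exists Q f hf i N M hNM
    have hM_eq : bwalk Q f i M = bwalk Q f i j := by
      have := hper 0 c
      simpa using this
    refine ⟨bwalk Q f i j, b, bpath Q f hf i j, QP.castSrc hM_eq q0, ?_, ?_⟩
    · -- associated pair: first arrows differ (or `p` is trivial)
      intro a hpa hqa
      exfalso
      rw [QP.firstArrow_castSrc, hq0fa, if_neg (by omega : ¬ N = 0)] at hqa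
      rcases Nat.eq_zero_or_pos j with hj0 | hjpos
      · rw [hj0, QP.firstArrow_eq_none _ (bpath_length Q f hf i 0)] at hpa
        exact Option.noConfusion rfl (heq_of_eq hpa)
      · obtain ⟨j', hj'⟩ : ∃ j', j = j' + 1 := ⟨j - 1, by omega⟩
        rw [hj', bpath_firstArrow] at hpa
        have hfeq : f (bwalk Q f i j') = f (bwalk Q f i (M - 1)) := by
          rw [Option.some_inj] at hpa hqa
          rw [hpa, hqa]
        have hweq : bwalk Q f i j' = bwalk Q f i (M - 1) := by
          have h1 := hf (bwalk Q f i j')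
          have h2 := hf (bwalk Q f i (M - 1))
          rw [← h1, ← h2, hfeq]
        have hM1 : M - 1 = j' + c * L := by omega
        rw [hM1] at hweq
        have : j' < j' + 1 := by omega
        exact Nat.find_min hex (by omega : j' < j)
          ⟨j' + c * L, by
            have : 1 ≤ c * L := by
              calc 1 ≤ c := hc
              _ ≤ c * L := Nat.le_mul_of_pos_right c (by omega)
            omega, hweq⟩
    · rw [QP.length_castSrc, hq0len, bpath_length]
      omega
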